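/- If a directed graph G contains a Hamiltonian path from s to e, then its reduced graph contains a Hamiltonian path from the SCC of s to the SCC of e. -/

import Mathlib

variable {V : Type*}

/-- Reachability in a directed graph given by arc relation `A`. -/
def Reach (A : V → V → Prop) : V → V → Prop := Relation.ReflTransGen A

/-- Two vertices are in the same strongly connected component. -/
def SameSCC (A : V → V → Prop) (u v : V) : Prop := Reach A u v ∧ Reach A v u

/-- The strongly connected component of a vertex. -/
def sccOf (A : V → V → Prop) (v : V) : Set V := {u | SameSCC A v u}

/-- A set is a strongly connected component. -/
def IsSCC (A : V → V → Prop) (X : Set V) : Prop := ∃ v, X = sccOf A v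

/-- Arcs of the reduced graph (condensation): between distinct SCCs joined by an arc of `A`. -/
def CondArc (A : V → V → Prop) (X Y : Set V) : Prop :=
  IsSCC A X ∧ IsSCC A Y ∧ X ≠ Y ∧ ∃ u ∈ X, ∃ v ∈ Y, A u v

/-- A directed graph is acyclic: no arc lies on a directed cycle. -/
def Acyclic (A : V → V → Prop) : Prop := ∀ u v, A u v → ¬ Reach A v u

/-- A Hamiltonian path of the digraph `A`, as a duplicate-free list visiting every vertex. -/
def IsHamList (A : V → V → Prop) (p : List V) : Prop :=
  p.Chain' A ∧ p.Nodup ∧ ∀ v, v ∈ p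

/-- A Hamiltonian path from `s` to `e`. -/
def IsHamPath (A : V → V → Prop) (s e : V) (p : List V) : Prop :=
  IsHamList A p ∧ p.head? = some s ∧ p.getLast? = some e

/-- A Hamiltonian path of the reduced graph: a duplicate-free list of SCCs, chained by
condensation arcs, containing every SCC. -/
def RHamPath (A : V → V → Prop) (P : List (Set V)) : Prop :=
  (∀ X ∈ P, IsSCC A X) ∧ P.Chain' (CondArc A) ∧ P.Nodup ∧ ∀ X, IsSCC A X → X ∈ P

lemma sameSCC_refl (A : V → V → Prop) (v : V) : SameSCC A v v :=
  ⟨Relation.ReflTransGen.refl, Relation.ReflTransGen.refl⟩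

lemma sameSCC_symm {A : V → V → Prop} {u v : V} (h : SameSCC A u v) : SameSCC A v u :=
  ⟨h.2, h.1⟩

lemma sameSCC_trans {A : V → V → Prop} {u v w : V} (h1 : SameSCC A u v)
    (h2 : SameSCC A v w) : SameSCC A u w :=
  ⟨h1.1.trans h2.1, h2.2.trans h1.2⟩

lemma sccOf_eq_iff {A : V → V → Prop} {u v : V} :
    sccOf A u = sccOf A v ↔ SameSCC A u v := by
  constructor
  · intro h
    have hv : v ∈ sccOf A v := sameSCC_refl A v
    rw [← h] at hv
    exact hv
  · intro h
    ext w
    constructor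
    · intro hw; exact sameSCC_trans (sameSCC_symm h) hw
    · intro hw; exact sameSCC_trans h hw

lemma reach_of_chain {A : V → V → Prop} :
    ∀ {t : List V} {y z : V}, (y :: t).Chain' A → z ∈ y :: t → Reach A y z := by
  intro t
  induction t with
  | nil =>
    intro y z _ hz
    simp only [List.mem_singleton] at hz
    subst hz
    exact Relation.ReflTransGen.refl
  | cons c t ih =>
    intro y z hc hz
    rcases List.mem_cons.1 hz with rfl | hz
    · exact Relation.ReflTransGen.refl
    · have hyc : A y c := (List.isChain_cons_cons.1 hc).1
      exact (Relation.ReflTransGen.single hyc).trans (ih (List.isChain_cons_cons.1 hc).2 hz)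

/-- Block lemma: if `x`'s SCC reappears later in the chain, it equals the next SCC. -/
lemma block_lemma {A : V → V → Prop} {x y : V} {t : List V}
    (hc : (x :: y :: t).Chain' A) {z : V} (hz : z ∈ y :: t)
    (he : sccOf A x = sccOf A z) : sccOf A x = sccOf A y := by
  have hxy : A x y := (List.isChain_cons_cons.1 hc).1
  have hyz : Reach A y z := reach_of_chain (List.isChain_cons_cons.1 hc).2 hz
  have hzx : Reach A z x := (sccOf_eq_iff.1 he).2
  exact sccOf_eq_iff.2 ⟨Relation.ReflTransGen.single hxy, hyz.trans hzx⟩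

open Classical in
/-- The condensation path of a vertex path. -/
noncomputable def condPath (A : V → V → Prop) : List V → List (Set V)
  | [] => []
  | [x] => [sccOf A x]
  | x :: y :: t =>
    if sccOf A x = sccOf A y then condPath A (y :: t)
    else sccOf A x :: condPath A (y :: t)

lemma condPath_ne_nil (A : V → V → Prop) : ∀ (x : V) (t : List V),
    condPath A (x :: t) ≠ [] := by
  intro x t
  cases t with
  | nil => simp [condPath]
  | cons y t =>
    simp only [condPath]
    split
    · exact condPath_ne_nil A y t
    · simp

lemma condPath_head (A : V → V → Prop) : ∀ (t : List V) (x : V),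
    (condPath A (x :: t)).head? = some (sccOf A x) := by
  intro t
  induction t with
  | nil => intro x; simp [condPath]
  | cons y t ih =>
    intro x
    simp only [condPath]
    split
    · rename_i h
      rw [ih y, h]
    · simp

lemma condPath_getLast (A : V → V → Prop) : ∀ (t : List V) (x : V),
    (condPath A (x :: t)).getLast? = ((x :: t).map (sccOf A)).getLast? := by
  intro t
  induction t with
  | nil => intro x; simp [condPath]
  | cons y t ih =>
    intro x
    simp only [condPath]
    split
    · rw [ih y]
      simp [List.getLast?_cons_cons]
    · obtain ⟨c, cs, hcc⟩ := List.exists_cons_of_ne_nil (condPath_ne_nil A y t)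
      rw [hcc, List.getLast?_cons_cons, ← hcc, ih y]
      simp [List.getLast?_cons_cons]

lemma condPath_mem (A : V → V → Prop) : ∀ (l : List V) (X : Set V),
    X ∈ condPath A l ↔ X ∈ l.map (sccOf A) := by
  intro l
  match l with
  | [] => intro X; simp [condPath]
  | [x] => intro X; simp [condPath]
  | x :: y :: t =>
    intro X
    simp only [condPath]
    split
    · rename_i h
      rw [condPath_mem A (y :: t)]
      simp only [List.map_cons, List.mem_cons]
      constructor
      · intro hx; right; exact hx
      · rintro (rfl | hx)
        · left; exact h
        · exact hx
    · rw [List.mem_cons, condPath_mem A (y :: t)]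
      simp only [List.map_cons, List.mem_cons]

lemma condPath_chain (A : V → V → Prop) : ∀ (l : List V), l.Chain' A →
    (condPath A l).Chain' (CondArc A) := by
  intro l
  match l with
  | [] => intro _; simp [condPath]; exact List.isChain_nil
  | [x] => intro _; simp [condPath]; exact List.isChain_singleton _
  | x :: y :: t =>
    intro hc
    simp only [condPath]
    split
    · exact condPath_chain A (y :: t) (List.isChain_cons_cons.1 hc).2
    · rename_i hne
      refine List.isChain_cons.2 ?_
      refine ⟨?_, condPath_chain A (y :: t) (List.isChain_cons_cons.1 hc).2⟩
      intro b hb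
      rw [condPath_head A t y] at hb
      simp only [Option.mem_def, Option.some.injEq] at hb
      subst hb
      exact ⟨⟨x, rfl⟩, ⟨y, rfl⟩, hne, x, sameSCC_refl A x, y, sameSCC_refl A y,
        (List.isChain_cons_cons.1 hc).1⟩

lemma condPath_nodup (A : V → V → Prop) : ∀ (l : List V), l.Chain' A →
    (condPath A l).Nodup := by
  intro l
  match l with
  | [] => intro _; simp [condPath]
  | [x] => intro _; simp [condPath]
  | x :: y :: t =>
    intro hc
    simp only [condPath]
    split
    · exact condPath_nodup A (y :: t) (List.isChain_cons_cons.1 hc).2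
    · rename_i hne
      refine List.nodup_cons.2 ⟨?_, condPath_nodup A (y :: t) (List.isChain_cons_cons.1 hc).2⟩
      intro hmem
      rw [condPath_mem A (y :: t)] at hmem
      obtain ⟨z, hz, hze⟩ := List.mem_map.1 hmem
      exact hne (block_lemma hc hz hze.symm)

/-- If `G` has a Hamiltonian path from `s` to `e`, then its reduced graph has a
Hamiltonian path from the SCC of `s` to the SCC of `e`. -/
theorem reduced_graph_hamiltonian_path_exists (A : V → V → Prop) (s e : V)
    (H : List V) (hH : IsHamPath A s e H) :
    ∃ P : List (Set V), RHamPath A P ∧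
      P.head? = some (sccOf A s) ∧ P.getLast? = some (sccOf A e) := by
  obtain ⟨⟨hchain, _, hall⟩, hhead, hlast⟩ := hH
  refine ⟨condPath A H, ⟨?_, condPath_chain A H hchain, condPath_nodup A H hchain, ?_⟩, ?_, ?_⟩
  · intro X hX
    rw [condPath_mem A H] at hX
    obtain ⟨v, _, rfl⟩ := List.mem_map.1 hX
    exact ⟨v, rfl⟩
  · rintro X ⟨v, rfl⟩
    rw [condPath_mem A H]
    exact List.mem_map.2 ⟨v, hall v, rfl⟩
  · cases H with
    | nil => simp at hhead
    | cons a t =>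
      simp only [List.head?_cons, Option.some.injEq] at hhead
      subst hhead
      exact condPath_head A t a
  · cases H with
    | nil => simp at hhead
    | cons a t =>
      rw [condPath_getLast A t a, List.getLast?_map, hlast]
      rfl
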